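/- Let P(z) = Σ_{k=0}^m A_k z^k be a matrix polynomial with A_0 and A_m both invertible. Then all eigenvalues of P lie in the annulus r₁ ≤ |z| ≤ r₂, where r₁ = min_{1≤k≤m} {2^{3(1−m)} C(2m,m+k) 𝒫_k² / (‖A_0^{-1}‖‖A_k‖)}^{1/k} and r₂ = max_{1≤k≤m} {2^{3(m−1)} C(2m,m+k)^{-1} 𝒫_k^{-2} ‖A_{m−k}‖‖A_m^{-1}‖}^{1/k}, with 𝒫_k the k-th Pell number. -/

import Mathlib

/-- Pell numbers. -/
def pell : ℕ → ℕ
  | 0 => 0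
  | 1 => 1
  | (n + 2) => 2 * pell (n + 1) + pell n

/-- Operator norm of a complex matrix, subordinate to the Euclidean vector norm. -/
noncomputable def opNorm {n : ℕ} (A : Matrix (Fin n) (Fin n) ℂ) : ℝ :=
  ‖Matrix.toEuclideanCLM (𝕜 := ℂ) A‖

namespace PellAux

def α : Zsqrtd 2 := ⟨1,1⟩
def β : Zsqrtd 2 := ⟨1,-1⟩

lemma alpha_sq : α ^ 2 = 2 * α + 1 := by ext <;> simp [α, sq, Zsqrtd.re_mul, Zsqrtd.im_mul] <;> ring
lemma beta_sq : β ^ 2 = 2 * β + 1 := by ext <;> simp [β, sq, Zsqrtd.re_mul, Zsqrtd.im_mul] <;> ring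
lemma alpha_mul_beta : α * β = -1 := by ext <;> simp [α, β, Zsqrtd.re_mul, Zsqrtd.im_mul]

lemma diff_pow : ∀ k : ℕ, α ^ k - β ^ k = (⟨0, 2 * pell k⟩ : Zsqrtd 2)
  | 0 => by ext <;> simp [pell]
  | 1 => by ext <;> simp [α, β, pell]
  | (k+2) => by
      have h1 := diff_pow (k+1)
      have h0 := diff_pow k
      have ha : α ^ (k+2) = 2 * α ^ (k+1) + α ^ k := by
        calc α ^ (k+2) = α ^ k * α ^ 2 := by ring
        _ = 2 * α ^ (k+1) + α ^ k := by rw [alpha_sq]; ring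
      have hb : β ^ (k+2) = 2 * β ^ (k+1) + β ^ k := by
        calc β ^ (k+2) = β ^ k * β ^ 2 := by ring
        _ = 2 * β ^ (k+1) + β ^ k := by rw [beta_sq]; ring
      rw [ha, hb]
      have : α ^ (k + 2) - β ^ (k + 2) = 2 * (α ^ (k+1) - β ^ (k+1)) + (α ^ k - β ^ k) := by
        rw [ha, hb]; ring
      rw [show 2 * α ^ (k+1) + α ^ k - (2 * β ^ (k+1) + β ^ k)
            = 2 * (α ^ (k+1) - β ^ (k+1)) + (α ^ k - β ^ k) by ring, h1, h0]
      ext <;> simp [pell, Zsqrtd.im_mul, Zsqrtd.re_mul] <;> push_cast <;> ring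

lemma even_pow_add (k : ℕ) :
    α ^ (2*k) + β ^ (2*k) = ((8 * (pell k : ℤ) ^ 2 + 2 * (-1)^k : ℤ) : Zsqrtd 2) := by
  have h := diff_pow k
  have hab : (α * β) ^ k = ((-1 : ℤ) : Zsqrtd 2) ^ k := by rw [alpha_mul_beta]; push_cast; ring
  have key : (α ^ k - β ^ k) ^ 2 = α ^ (2*k) + β ^ (2*k) - 2 * (α*β)^k := by ring
  have h2 : (α ^ k - β ^ k) ^ 2 = ((8 * (pell k : ℤ)^2 : ℤ) : Zsqrtd 2) := by
    rw [h]; ext <;> simp [sq, Zsqrtd.re_mul, Zsqrtd.im_mul] <;> ring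
  have := key.symm.trans h2
  have : α ^ (2*k) + β ^ (2*k)
      = ((8 * (pell k : ℤ)^2 : ℤ) : Zsqrtd 2) + 2 * (α*β)^k := by
    linear_combination this
  rw [this, hab]
  push_cast
  ring

lemma diff_sq : (α - β)^2 = 8 := by ext <;> simp [α, β, sq, Zsqrtd.re_mul, Zsqrtd.im_mul]

lemma sum_a (m : ℕ) :
    ∑ j ∈ Finset.range (2*m+1), ((2*m).choose j : Zsqrtd 2) * (α ^ (2*j) * β ^ (2*m)
      + β ^ (2*j) * α ^ (2*m)) = 2 * 8 ^ m := by
  have hA : ∑ j ∈ Finset.range (2*m+1), ((2*m).choose j : Zsqrtd 2) * (α ^ (2*j) * β ^ (2*m))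
      = (β - α) ^ (2*m) := by
    calc ∑ j ∈ Finset.range (2*m+1), ((2*m).choose j : Zsqrtd 2) * (α ^ (2*j) * β ^ (2*m))
        = (∑ j ∈ Finset.range (2*m+1), (α^2) ^ j * 1 ^ (2*m - j) * ((2*m).choose j : Zsqrtd 2))
          * β ^ (2*m) := by
          rw [Finset.sum_mul]
          refine Finset.sum_congr rfl fun j _ => by rw [pow_mul]; ring
      _ = (α^2 + 1) ^ (2*m) * β ^ (2*m) := by rw [← add_pow]
      _ = ((α^2 + 1) * β) ^ (2*m) := by rw [mul_pow]
      _ = (β - α) ^ (2*m) := by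
          have h1 : (α^2 + 1) * β = β - α := by
            have h2 : (α^2 + 1) * β = α * (α * β) + β := by ring
            rw [h2, alpha_mul_beta]; ring
          rw [h1]
  have hB : ∑ j ∈ Finset.range (2*m+1), ((2*m).choose j : Zsqrtd 2) * (β ^ (2*j) * α ^ (2*m))
      = (α - β) ^ (2*m) := by
    calc ∑ j ∈ Finset.range (2*m+1), ((2*m).choose j : Zsqrtd 2) * (β ^ (2*j) * α ^ (2*m))
        = (∑ j ∈ Finset.range (2*m+1), (β^2) ^ j * 1 ^ (2*m - j) * ((2*m).choose j : Zsqrtd 2))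
          * α ^ (2*m) := by
          rw [Finset.sum_mul]
          refine Finset.sum_congr rfl fun j _ => by rw [pow_mul]; ring
      _ = (β^2 + 1) ^ (2*m) * α ^ (2*m) := by rw [← add_pow]
      _ = ((β^2 + 1) * α) ^ (2*m) := by rw [mul_pow]
      _ = (α - β) ^ (2*m) := by
          have h1 : (β^2 + 1) * α = α - β := by
            have h2 : (β^2 + 1) * α = β * (α * β) + α := by rw [mul_comm α β]; ring
            rw [h2, alpha_mul_beta]; ring
          rw [h1]
  have h8 : (α - β) ^ (2*m) = 8 ^ m := by rw [pow_mul, diff_sq]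
  have h8' : (β - α) ^ (2*m) = 8 ^ m := by
    rw [pow_mul, show (β - α)^2 = (α - β)^2 by ring, diff_sq]
  have split : ∑ j ∈ Finset.range (2*m+1), ((2*m).choose j : Zsqrtd 2) * (α ^ (2*j) * β ^ (2*m)
      + β ^ (2*j) * α ^ (2*m))
    = (∑ j ∈ Finset.range (2*m+1), ((2*m).choose j : Zsqrtd 2) * (α ^ (2*j) * β ^ (2*m)))
    + (∑ j ∈ Finset.range (2*m+1), ((2*m).choose j : Zsqrtd 2) * (β ^ (2*j) * α ^ (2*m))) := by
    rw [← Finset.sum_add_distrib]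
    exact Finset.sum_congr rfl fun j _ => by ring
  rw [split, hA, hB, h8, h8']
  ring

lemma term_eq (m j : ℕ) :
    α ^ (2*j) * β ^ (2*m) + β ^ (2*j) * α ^ (2*m)
      = α ^ (2 * Nat.dist j m) + β ^ (2 * Nat.dist j m) := by
  have hab : ∀ t : ℕ, (α * β) ^ (2*t) = 1 := by
    intro t; rw [alpha_mul_beta, pow_mul]; norm_num
  rcases le_total j m with h | h
  · have hd : Nat.dist j m = m - j := by simp [Nat.dist]; omega
    rw [hd]
    calc α ^ (2*j) * β ^ (2*m) + β ^ (2*j) * α ^ (2*m)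
        = (α*β)^(2*j) * β ^ (2*(m-j)) + (α*β)^(2*j) * α ^ (2*(m-j)) := by
          rw [mul_pow]
          rw [show 2*m = 2*j + 2*(m-j) by omega, pow_add, pow_add]; ring
      _ = α ^ (2 * (m-j)) + β ^ (2 * (m-j)) := by rw [hab]; ring
  · have hd : Nat.dist j m = j - m := by simp [Nat.dist]; omega
    rw [hd]
    calc α ^ (2*j) * β ^ (2*m) + β ^ (2*j) * α ^ (2*m)
        = (α*β)^(2*m) * α ^ (2*(j-m)) + (α*β)^(2*m) * β ^ (2*(j-m)) := by
          rw [mul_pow]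
          rw [show 2*j = 2*m + 2*(j-m) by omega, pow_add, pow_add]; ring
      _ = α ^ (2 * (j-m)) + β ^ (2 * (j-m)) := by rw [hab]; ring

lemma int_sum (m : ℕ) :
    ∑ j ∈ Finset.range (2*m+1),
      ((2*m).choose j : ℤ) * (8 * (pell (Nat.dist j m) : ℤ)^2 + 2 * (-1)^(Nat.dist j m))
      = 2 * 8 ^ m := by
  have h := sum_a m
  have h2 : ∑ j ∈ Finset.range (2*m+1), ((2*m).choose j : Zsqrtd 2) * (α ^ (2*j) * β ^ (2*m)
      + β ^ (2*j) * α ^ (2*m))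
    = ((∑ j ∈ Finset.range (2*m+1),
      ((2*m).choose j : ℤ) * (8 * (pell (Nat.dist j m) : ℤ)^2 + 2 * (-1)^(Nat.dist j m)) : ℤ)
      : Zsqrtd 2) := by
    push_cast
    refine Finset.sum_congr rfl fun j hj => ?_
    rw [term_eq m j, even_pow_add]
    push_cast; ring
  rw [h2] at h
  have h3 : ((2 * 8 ^ m : ℤ) : Zsqrtd 2) = 2 * 8 ^ m := by push_cast; ring
  rw [← h3] at h
  exact_mod_cast h
lemma neg_one_pow_congr {a b : ℕ} (h : a % 2 = b % 2) : ((-1:ℤ))^a = (-1)^b := by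
  rcases Nat.even_or_odd a with ha | ha
  · rw [ha.neg_one_pow, (Nat.even_iff.mpr (by rw [← h]; exact Nat.even_iff.mp ha)).neg_one_pow]
  · rw [ha.neg_one_pow, (Nat.odd_iff.mpr (by rw [← h]; exact Nat.odd_iff.mp ha)).neg_one_pow]

lemma alt_sum (m : ℕ) (hm : 0 < m) :
    ∑ j ∈ Finset.range (2*m+1), ((2*m).choose j : ℤ) * (2 * (-1)^(Nat.dist j m)) = 0 := by
  have h1 : ∀ j, ((-1:ℤ))^(Nat.dist j m) = (-1)^m * (-1)^j := by
    intro j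
    rw [← pow_add]
    exact neg_one_pow_congr (by simp [Nat.dist]; omega)
  calc ∑ j ∈ Finset.range (2*m+1), ((2*m).choose j : ℤ) * (2 * (-1)^(Nat.dist j m))
      = (2 * (-1)^m) * ∑ j ∈ Finset.range (2*m+1), (-1)^j * ((2*m).choose j : ℤ) := by
        rw [Finset.mul_sum]
        exact Finset.sum_congr rfl fun j _ => by rw [h1 j]; ring
    _ = 0 := by
        rw [Int.alternating_sum_range_choose_of_ne (by omega : 2*m ≠ 0)]; ring

lemma reindex (m : ℕ) :
    ∑ j ∈ Finset.range (2*m+1), ((2*m).choose j : ℤ) * (pell (Nat.dist j m) : ℤ)^2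
      = 2 * ∑ k ∈ Finset.Icc 1 m, ((2*m).choose (m+k) : ℤ) * (pell k : ℤ)^2 := by
  have hsplit : ∑ j ∈ Finset.range (2*m+1), ((2*m).choose j : ℤ) * (pell (Nat.dist j m) : ℤ)^2
      = (∑ j ∈ Finset.Ico 0 (m+1), ((2*m).choose j : ℤ) * (pell (Nat.dist j m) : ℤ)^2)
      + ∑ j ∈ Finset.Ico (m+1) (2*m+1), ((2*m).choose j : ℤ) * (pell (Nat.dist j m) : ℤ)^2 := by
    rw [Finset.range_eq_Ico, ← Finset.sum_Ico_consecutive _ (by omega : 0 ≤ m+1) (by omega : m+1 ≤ 2*m+1)]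
  have hIcc : ∑ k ∈ Finset.Icc 1 m, ((2*m).choose (m+k) : ℤ) * (pell k : ℤ)^2
      = ∑ i ∈ Finset.range m, ((2*m).choose (m+1+i) : ℤ) * (pell (1+i) : ℤ)^2 := by
    rw [show Finset.Icc 1 m = Finset.Ico 1 (m+1) by rfl, Finset.sum_Ico_eq_sum_range]
    simp only [Nat.add_sub_cancel]
    exact Finset.sum_congr rfl fun i _ => by rw [show m+(1+i) = m+1+i by omega]
  have h2 : ∑ j ∈ Finset.Ico (m+1) (2*m+1), ((2*m).choose j : ℤ) * (pell (Nat.dist j m) : ℤ)^2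
      = ∑ i ∈ Finset.range m, ((2*m).choose (m+1+i) : ℤ) * (pell (1+i) : ℤ)^2 := by
    rw [Finset.sum_Ico_eq_sum_range]
    rw [show 2*m+1 - (m+1) = m by omega]
    refine Finset.sum_congr rfl fun i _ => ?_
    rw [show m+1+i = m + (1+i) by omega, show Nat.dist (m+(1+i)) m = 1+i by simp [Nat.dist]]
  have h1 : ∑ j ∈ Finset.Ico 0 (m+1), ((2*m).choose j : ℤ) * (pell (Nat.dist j m) : ℤ)^2
      = ∑ i ∈ Finset.range m, ((2*m).choose (m+1+i) : ℤ) * (pell (1+i) : ℤ)^2 := by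
    rw [← Finset.range_eq_Ico, ← Finset.sum_range_reflect, Finset.sum_range_succ']
    have hz : ((2*m).choose (m+1-1-0) : ℤ) * (pell (Nat.dist (m+1-1-0) m) : ℤ)^2 = 0 := by
      rw [show m+1-1-0 = m by omega]
      simp [Nat.dist_self, pell]
    rw [hz, add_zero]
    refine Finset.sum_congr rfl fun i hi => ?_
    have him : i < m := Finset.mem_range.mp hi
    have hd : Nat.dist (m+1-1-(i+1)) m = 1+i := by simp [Nat.dist]; omega
    have hc : (2*m).choose (m+1-1-(i+1)) = (2*m).choose (m+1+i) := by
      rw [← Nat.choose_symm (show m+1+i ≤ 2*m by omega)]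
      congr 1
      omega
    rw [hd, hc]
  rw [hsplit, h1, h2, hIcc]; ring

lemma final_sum (m : ℕ) (hm : 0 < m) :
    ∑ k ∈ Finset.Icc 1 m, ((2*m).choose (m+k) : ℤ) * (pell k : ℤ)^2 = 8 ^ (m-1) := by
  have h := int_sum m
  have hsplit : ∑ j ∈ Finset.range (2*m+1),
      ((2*m).choose j : ℤ) * (8 * (pell (Nat.dist j m) : ℤ)^2 + 2 * (-1)^(Nat.dist j m))
    = 8 * (∑ j ∈ Finset.range (2*m+1), ((2*m).choose j : ℤ) * (pell (Nat.dist j m) : ℤ)^2)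
      + ∑ j ∈ Finset.range (2*m+1), ((2*m).choose j : ℤ) * (2 * (-1)^(Nat.dist j m)) := by
    rw [Finset.mul_sum, ← Finset.sum_add_distrib]
    exact Finset.sum_congr rfl fun j _ => by ring
  rw [hsplit, alt_sum m hm, reindex m] at h
  have h8 : (8:ℤ)^m = 8 * 8^(m-1) := by
    rw [← pow_succ']; congr 1; omega
  rw [h8] at h
  linarith
lemma pell_pos : ∀ k, 0 < pell (k+1)
  | 0 => by simp [pell]
  | (k+1) => by have := pell_pos k; simp only [pell]; omega

lemma opNorm_inv_pos {n : ℕ} (hn : 0 < n) (B : Matrix (Fin n) (Fin n) ℂ)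
    (hB : IsUnit B.det) : 0 < opNorm B⁻¹ := by
  rw [opNorm, norm_pos_iff]
  intro h
  have hB0 : B⁻¹ = 0 := by
    have := (Matrix.toEuclideanCLM (𝕜 := ℂ) (n := Fin n)).injective (a₁ := B⁻¹) (a₂ := 0)
    simp only [map_zero] at this
    exact this h
  have h1 : (B⁻¹ * B : Matrix _ _ ℂ) = 1 := Matrix.nonsing_inv_mul _ hB
  rw [hB0, zero_mul] at h1
  have h2 := congrFun (congrFun h1.symm ⟨0, hn⟩) ⟨0, hn⟩
  simp [Matrix.one_apply] at h2

lemma rpow_one_div_pow {x : ℝ} (hx : 0 ≤ x) {k : ℕ} (hk : k ≠ 0) :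
    (x ^ ((1:ℝ)/k)) ^ k = x := by
  rw [← Real.rpow_natCast (x ^ ((1:ℝ)/(k:ℝ))) k, ← Real.rpow_mul hx, one_div,
    inv_mul_cancel₀ (Nat.cast_ne_zero.mpr hk), Real.rpow_one]

lemma two_zpow_neg (m : ℕ) (hm : 0 < m) :
    (2:ℝ) ^ ((3:ℤ) * (1 - (m:ℤ))) = ((8:ℝ) ^ (m-1))⁻¹ := by
  have h1 : (3:ℤ) * (1 - (m:ℤ)) = -((3*(m-1) : ℕ) : ℤ) := by push_cast [Nat.cast_sub hm]; ring
  rw [h1, zpow_neg, zpow_natCast, pow_mul]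
  norm_num

lemma two_zpow_pos (m : ℕ) (hm : 0 < m) :
    (2:ℝ) ^ ((3:ℤ) * ((m:ℤ) - 1)) = (8:ℝ) ^ (m-1) := by
  have h1 : (3:ℤ) * ((m:ℤ) - 1) = ((3*(m-1) : ℕ) : ℤ) := by push_cast [Nat.cast_sub hm]; ring
  rw [h1, zpow_natCast, pow_mul]
  norm_num
lemma opNorm_nonneg {n : ℕ} (A : Matrix (Fin n) (Fin n) ℂ) : 0 ≤ opNorm A :=
  norm_nonneg _

lemma one_le_low {n : ℕ} (m : ℕ) (A : ℕ → Matrix (Fin n) (Fin n) ℂ)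
    (hA0 : IsUnit (A 0).det) (lam : ℂ) (u : Fin n → ℂ) (hu : u ≠ 0)
    (hlam : (∑ k ∈ Finset.range (m + 1), lam ^ k • A k).mulVec u = 0) :
    1 ≤ ∑ k ∈ Finset.Icc 1 m, opNorm (A 0)⁻¹ * opNorm (A k) * (‖lam‖) ^ k := by
  set T : ℕ → (EuclideanSpace ℂ (Fin n) →L[ℂ] EuclideanSpace ℂ (Fin n)) :=
    fun k => Matrix.toEuclideanCLM (𝕜 := ℂ) (A k) with hT
  set v : EuclideanSpace ℂ (Fin n) := (WithLp.equiv 2 (Fin n → ℂ)).symm u with hv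
  have hv0 : v ≠ 0 := by
    simp only [hv, ne_eq]
    intro h
    exact hu ((WithLp.equiv 2 (Fin n → ℂ)).symm.injective (h.trans (by simp)))
  have hvpos : 0 < ‖v‖ := norm_pos_iff.mpr hv0
  have key : ∑ k ∈ Finset.range (m + 1), lam ^ k • (T k v) = 0 := by
    have h1 : Matrix.toEuclideanCLM (𝕜 := ℂ) (∑ k ∈ Finset.range (m + 1), lam ^ k • A k) v
        = 0 := by
      rw [hv, WithLp.equiv_symm_apply, Matrix.toEuclideanCLM_toLp, hlam]
      simp
    rw [map_sum, ContinuousLinearMap.sum_apply] at h1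
    rw [← h1]
    exact Finset.sum_congr rfl fun k _ => by rw [map_smul]; rfl
  have h0 : T 0 v = -∑ i ∈ Finset.range m, lam ^ (i+1) • T (i+1) v := by
    rw [Finset.sum_range_succ'] at key
    simp only [pow_zero, one_smul] at key
    exact eq_neg_of_add_eq_zero_right key
  have hinv : Matrix.toEuclideanCLM (𝕜 := ℂ) ((A 0)⁻¹) (T 0 v) = v := by
    rw [hT]
    simp only
    rw [← ContinuousLinearMap.mul_apply, ← map_mul, Matrix.nonsing_inv_mul _ hA0, map_one,
      ContinuousLinearMap.one_apply]
  have hub : ‖v‖ ≤ opNorm (A 0)⁻¹ *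
      ∑ i ∈ Finset.range m, (‖lam‖) ^ (i+1) * opNorm (A (i+1)) * ‖v‖ := by
    calc ‖v‖ = ‖Matrix.toEuclideanCLM (𝕜 := ℂ) ((A 0)⁻¹) (T 0 v)‖ := by rw [hinv]
      _ ≤ opNorm (A 0)⁻¹ * ‖T 0 v‖ := ContinuousLinearMap.le_opNorm _ _
      _ ≤ opNorm (A 0)⁻¹ *
          ∑ i ∈ Finset.range m, (‖lam‖) ^ (i+1) * opNorm (A (i+1)) * ‖v‖ := by
        refine mul_le_mul_of_nonneg_left ?_ (opNorm_nonneg _)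
        rw [h0, norm_neg]
        refine (norm_sum_le _ _).trans (Finset.sum_le_sum fun i _ => ?_)
        rw [norm_smul, norm_pow]
        calc ‖lam‖ ^ (i+1) * ‖T (i+1) v‖
            ≤ ‖lam‖ ^ (i+1) * (opNorm (A (i+1)) * ‖v‖) := by
              refine mul_le_mul_of_nonneg_left (ContinuousLinearMap.le_opNorm _ _)
                (by positivity)
          _ = (‖lam‖) ^ (i+1) * opNorm (A (i+1)) * ‖v‖ := by
              ring
  have h1le : 1 ≤ ∑ i ∈ Finset.range m, opNorm (A 0)⁻¹ * opNorm (A (i+1))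
      * (‖lam‖) ^ (i+1) := by
    have h2 : ‖v‖ ≤ (∑ i ∈ Finset.range m, opNorm (A 0)⁻¹ * opNorm (A (i+1))
        * (‖lam‖) ^ (i+1)) * ‖v‖ := by
      refine hub.trans (le_of_eq ?_)
      rw [Finset.sum_mul, Finset.mul_sum]
      exact Finset.sum_congr rfl fun i _ => by ring
    nlinarith
  refine le_trans h1le (le_of_eq ?_)
  rw [show Finset.Icc 1 m = Finset.Ico 1 (m+1) by rfl, Finset.sum_Ico_eq_sum_range]
  simp only [Nat.add_sub_cancel]
  exact Finset.sum_congr rfl fun i _ => by rw [Nat.add_comm 1 i]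
lemma lam_ne_zero {n : ℕ} (m : ℕ) (A : ℕ → Matrix (Fin n) (Fin n) ℂ)
    (hA0 : IsUnit (A 0).det) (lam : ℂ) (u : Fin n → ℂ) (hu : u ≠ 0)
    (hlam : (∑ k ∈ Finset.range (m + 1), lam ^ k • A k).mulVec u = 0) :
    lam ≠ 0 := by
  intro h
  subst h
  have h2 : (∑ k ∈ Finset.range (m + 1), (0:ℂ) ^ k • A k) = A 0 := by
    rw [Finset.sum_range_succ']
    simp
  rw [h2] at hlam
  have : u = 0 := by
    have := congrArg (fun w => (A 0)⁻¹.mulVec w) hlam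
    simpa [Matrix.mulVec_mulVec, Matrix.nonsing_inv_mul _ hA0] using this
  exact hu this

lemma one_le_up {n : ℕ} (m : ℕ) (hm : 0 < m) (A : ℕ → Matrix (Fin n) (Fin n) ℂ)
    (hAm : IsUnit (A m).det) (lam : ℂ) (hlam0 : lam ≠ 0) (u : Fin n → ℂ) (hu : u ≠ 0)
    (hlam : (∑ k ∈ Finset.range (m + 1), lam ^ k • A k).mulVec u = 0) :
    1 ≤ ∑ k ∈ Finset.Icc 1 m, opNorm (A m)⁻¹ * opNorm (A (m - k))
      * ((‖lam‖) ^ k)⁻¹ := by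
  set T : ℕ → (EuclideanSpace ℂ (Fin n) →L[ℂ] EuclideanSpace ℂ (Fin n)) :=
    fun k => Matrix.toEuclideanCLM (𝕜 := ℂ) (A k) with hT
  set v : EuclideanSpace ℂ (Fin n) := (WithLp.equiv 2 (Fin n → ℂ)).symm u with hv
  have hv0 : v ≠ 0 := by
    simp only [hv, ne_eq]
    intro h
    exact hu ((WithLp.equiv 2 (Fin n → ℂ)).symm.injective (h.trans (by simp)))
  have hvpos : 0 < ‖v‖ := norm_pos_iff.mpr hv0
  have hc : 0 < ‖lam‖ := by
    exact norm_pos_iff.mpr hlam0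
  have key : ∑ k ∈ Finset.range (m + 1), lam ^ k • (T k v) = 0 := by
    have h1 : Matrix.toEuclideanCLM (𝕜 := ℂ) (∑ k ∈ Finset.range (m + 1), lam ^ k • A k) v
        = 0 := by
      rw [hv, WithLp.equiv_symm_apply, Matrix.toEuclideanCLM_toLp, hlam]
      simp
    rw [map_sum, ContinuousLinearMap.sum_apply] at h1
    rw [← h1]
    exact Finset.sum_congr rfl fun k _ => by rw [map_smul]; rfl
  have h0 : lam ^ m • T m v = -∑ k ∈ Finset.range m, lam ^ k • T k v := by
    rw [Finset.sum_range_succ] at key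
    exact eq_neg_of_add_eq_zero_right key
  have hTm : T m v = (lam ^ m)⁻¹ • -∑ k ∈ Finset.range m, lam ^ k • T k v := by
    rw [← h0, smul_smul, inv_mul_cancel₀ (pow_ne_zero _ hlam0), one_smul]
  have hinv : Matrix.toEuclideanCLM (𝕜 := ℂ) ((A m)⁻¹) (T m v) = v := by
    rw [hT]
    simp only
    rw [← ContinuousLinearMap.mul_apply, ← map_mul, Matrix.nonsing_inv_mul _ hAm, map_one,
      ContinuousLinearMap.one_apply]
  have hub : ‖v‖ ≤ opNorm (A m)⁻¹ * (((‖lam‖) ^ m)⁻¹ *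
      ∑ k ∈ Finset.range m, (‖lam‖) ^ k * opNorm (A k) * ‖v‖) := by
    calc ‖v‖ = ‖Matrix.toEuclideanCLM (𝕜 := ℂ) ((A m)⁻¹) (T m v)‖ := by rw [hinv]
      _ ≤ opNorm (A m)⁻¹ * ‖T m v‖ := ContinuousLinearMap.le_opNorm _ _
      _ ≤ _ := by
        refine mul_le_mul_of_nonneg_left ?_ (opNorm_nonneg _)
        rw [hTm, norm_smul, norm_inv, norm_pow, norm_neg]
        refine mul_le_mul_of_nonneg_left ?_ (by positivity)
        refine (norm_sum_le _ _).trans (Finset.sum_le_sum fun k _ => ?_)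
        rw [norm_smul, norm_pow]
        calc ‖lam‖ ^ k * ‖T k v‖
            ≤ ‖lam‖ ^ k * (opNorm (A k) * ‖v‖) :=
              mul_le_mul_of_nonneg_left (ContinuousLinearMap.le_opNorm _ _) (by positivity)
          _ = ‖lam‖ ^ k * opNorm (A k) * ‖v‖ := by ring
  have h1le : 1 ≤ ∑ k ∈ Finset.range m, opNorm (A m)⁻¹ * opNorm (A k)
      * ((‖lam‖) ^ (m - k))⁻¹ := by
    have h2 : ‖v‖ ≤ (∑ k ∈ Finset.range m, opNorm (A m)⁻¹ * opNorm (A k)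
        * ((‖lam‖) ^ (m - k))⁻¹) * ‖v‖ := by
      refine hub.trans (le_of_eq ?_)
      rw [Finset.mul_sum, Finset.mul_sum, Finset.sum_mul]
      refine Finset.sum_congr rfl fun k hk => ?_
      have hkm : k < m := Finset.mem_range.mp hk
      have hsplit : (‖lam‖) ^ m = (‖lam‖) ^ k * (‖lam‖) ^ (m - k) := by
        rw [← pow_add]
        congr 1
        omega
      rw [hsplit]
      field_simp
    nlinarith
  refine le_trans h1le (le_of_eq ?_)
  rw [← Finset.sum_range_reflect]
  rw [show Finset.Icc 1 m = Finset.Ico 1 (m+1) by rfl, Finset.sum_Ico_eq_sum_range]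
  simp only [Nat.add_sub_cancel]
  refine Finset.sum_congr rfl fun i hi => ?_
  have him : i < m := Finset.mem_range.mp hi
  rw [show m - 1 - i = m - (1 + i) by omega, show m - (m - (1+i)) = 1 + i by omega]
end PellAux

/-- Theorem 3: with `A_0, A_m` invertible, all eigenvalues of
`P(z) = ∑_k A_k z^k` lie in the annulus `r₁ ≤ |z| ≤ r₂`, where
`r₁ = min_{1≤k≤m} {2^{3(1−m)} C(2m,m+k) 𝒫_k² / (‖A_0⁻¹‖‖A_k‖)}^{1/k}` and
`r₂ = max_{1≤k≤m} {2^{3(m−1)} C(2m,m+k)⁻¹ 𝒫_k⁻² ‖A_{m−k}‖‖A_m⁻¹‖}^{1/k}`. -/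
theorem matrixPoly_eigenvalue_annulus_pell {n : ℕ} (m : ℕ) (hm : 0 < m)
    (A : ℕ → Matrix (Fin n) (Fin n) ℂ)
    (hA0 : IsUnit (A 0).det) (hAm : IsUnit (A m).det)
    (hne : (((Finset.Icc 1 m)).filter fun k => opNorm (A k) ≠ 0).Nonempty)
    (r₁ r₂ : ℝ)
    (hr₁ : r₁ = (((Finset.Icc 1 m)).filter fun k => opNorm (A k) ≠ 0).inf' hne
        fun k => ((2 : ℝ) ^ ((3 : ℤ) * (1 - (m : ℤ))) * (Nat.choose (2 * m) (m + k))
            * (pell k : ℝ) ^ 2 / (opNorm (A 0)⁻¹ * opNorm (A k)))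
          ^ ((1 : ℝ) / k))
    (hr₂ : r₂ = (Finset.Icc 1 m).sup' (Finset.nonempty_Icc.mpr hm)
        fun k => ((2 : ℝ) ^ ((3 : ℤ) * ((m : ℤ) - 1))
            * ((Nat.choose (2 * m) (m + k) : ℝ))⁻¹ * ((pell k : ℝ) ^ 2)⁻¹
            * opNorm (A (m - k)) * opNorm (A m)⁻¹)
          ^ ((1 : ℝ) / k))
    (lam : ℂ) (u : Fin n → ℂ) (hu : u ≠ 0)
    (hlam : (∑ k ∈ Finset.range (m + 1), lam ^ k • A k).mulVec u = 0) :
    r₁ ≤ ‖lam‖ ∧ ‖lam‖ ≤ r₂ := by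
  have hn : 0 < n := by
    rcases Nat.eq_zero_or_pos n with h | h
    · exact absurd (funext fun i => (h ▸ i).elim0) hu
    · exact h
  have hc0 : (0:ℝ) ≤ ‖lam‖ := norm_nonneg _
  have hlam0 : lam ≠ 0 := PellAux.lam_ne_zero m A hA0 lam u hu hlam
  have hcpos : (0:ℝ) < ‖lam‖ := norm_pos_iff.mpr hlam0
  have hsum8 : ∑ k ∈ Finset.Icc 1 m, ((2*m).choose (m+k) : ℝ) * (pell k : ℝ)^2
      = (8:ℝ) ^ (m-1) := by exact_mod_cast PellAux.final_sum m hm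
  have h8pos : (0:ℝ) < (8:ℝ) ^ (m-1) := by positivity
  have hQpos : ∀ k ∈ Finset.Icc 1 m, (0:ℝ) < ((2*m).choose (m+k) : ℝ) * (pell k : ℝ)^2 := by
    intro k hk
    obtain ⟨hk1, hk2⟩ := Finset.mem_Icc.mp hk
    have hch : 0 < (2*m).choose (m+k) := Nat.choose_pos (by omega)
    have hp : 0 < pell k := by
      obtain ⟨j, rfl⟩ : ∃ j, k = j+1 := ⟨k-1, by omega⟩
      exact PellAux.pell_pos j
    have hch' : (0:ℝ) < ((2*m).choose (m+k) : ℝ) := by exact_mod_cast hch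
    have hp' : (0:ℝ) < (pell k : ℝ) := by exact_mod_cast hp
    positivity
  have hEsum : ∑ k ∈ Finset.Icc 1 m,
      ((8:ℝ)^(m-1))⁻¹ * (((2*m).choose (m+k) : ℝ) * (pell k : ℝ)^2) = 1 := by
    rw [← Finset.mul_sum, hsum8, inv_mul_cancel₀ h8pos.ne']
  constructor
  · -- lower bound
    by_contra hcon
    push_neg at hcon
    have hlow := PellAux.one_le_low m A hA0 lam u hu hlam
    have hN0 : 0 < opNorm (A 0)⁻¹ := PellAux.opNorm_inv_pos hn _ hA0
    have hsub : ∑ k ∈ Finset.Icc 1 m,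
        opNorm (A 0)⁻¹ * opNorm (A k) * ‖lam‖ ^ k
      = ∑ k ∈ ((Finset.Icc 1 m).filter fun k => opNorm (A k) ≠ 0),
        opNorm (A 0)⁻¹ * opNorm (A k) * ‖lam‖ ^ k := by
      symm
      refine Finset.sum_subset (Finset.filter_subset _ _) fun x hx hnx => ?_
      have hx0 : opNorm (A x) = 0 := by
        by_contra hno
        exact hnx (Finset.mem_filter.mpr ⟨hx, hno⟩)
      rw [hx0]; ring
    have hstrict : ∀ k ∈ ((Finset.Icc 1 m).filter fun k => opNorm (A k) ≠ 0),
        opNorm (A 0)⁻¹ * opNorm (A k) * ‖lam‖ ^ k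
          < ((8:ℝ)^(m-1))⁻¹ * (((2*m).choose (m+k) : ℝ) * (pell k : ℝ)^2) := by
      intro k hk
      obtain ⟨hkI, hkN⟩ := Finset.mem_filter.mp hk
      obtain ⟨hk1, hk2⟩ := Finset.mem_Icc.mp hkI
      have hNk : 0 < opNorm (A k) := lt_of_le_of_ne (PellAux.opNorm_nonneg _) (Ne.symm hkN)
      have hQ := hQpos k hkI
      have hch' : (0:ℝ) < ((2*m).choose (m+k) : ℝ) := by
        exact_mod_cast Nat.choose_pos (by omega : m + k ≤ 2*m)
      have hp' : (0:ℝ) < (pell k : ℝ) := by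
        obtain ⟨j, rfl⟩ : ∃ j, k = j+1 := ⟨k-1, by omega⟩
        exact_mod_cast PellAux.pell_pos j
      have h2p : (0:ℝ) < (2 : ℝ) ^ ((3 : ℤ) * (1 - (m : ℤ))) := by positivity
      have hbase : (0:ℝ) < (2 : ℝ) ^ ((3 : ℤ) * (1 - (m : ℤ))) * ((2*m).choose (m+k) : ℝ)
          * (pell k : ℝ) ^ 2 / (opNorm (A 0)⁻¹ * opNorm (A k)) :=
        div_pos (mul_pos (mul_pos h2p hch') (pow_pos hp' 2)) (mul_pos hN0 hNk)
      have hrle : r₁ ≤ ((2 : ℝ) ^ ((3 : ℤ) * (1 - (m : ℤ))) * ((2*m).choose (m+k) : ℝ)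
          * (pell k : ℝ) ^ 2 / (opNorm (A 0)⁻¹ * opNorm (A k))) ^ ((1:ℝ)/k) := by
        rw [hr₁]
        exact Finset.inf'_le _ hk
      have hck : ‖lam‖ ^ k < (2 : ℝ) ^ ((3 : ℤ) * (1 - (m : ℤ)))
          * ((2*m).choose (m+k) : ℝ) * (pell k : ℝ) ^ 2
          / (opNorm (A 0)⁻¹ * opNorm (A k)) := by
        have h1 : ‖lam‖ < ((2 : ℝ) ^ ((3 : ℤ) * (1 - (m : ℤ)))
            * ((2*m).choose (m+k) : ℝ) * (pell k : ℝ) ^ 2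
            / (opNorm (A 0)⁻¹ * opNorm (A k))) ^ ((1:ℝ)/k) := lt_of_lt_of_le hcon hrle
        calc ‖lam‖ ^ k
            < (((2 : ℝ) ^ ((3 : ℤ) * (1 - (m : ℤ))) * ((2*m).choose (m+k) : ℝ)
              * (pell k : ℝ) ^ 2 / (opNorm (A 0)⁻¹ * opNorm (A k))) ^ ((1:ℝ)/k)) ^ k :=
              pow_lt_pow_left₀ h1 hc0 (by omega)
          _ = _ := PellAux.rpow_one_div_pow hbase.le (by omega)
      calc opNorm (A 0)⁻¹ * opNorm (A k) * ‖lam‖ ^ k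
          < opNorm (A 0)⁻¹ * opNorm (A k) * ((2 : ℝ) ^ ((3 : ℤ) * (1 - (m : ℤ)))
            * ((2*m).choose (m+k) : ℝ) * (pell k : ℝ) ^ 2
            / (opNorm (A 0)⁻¹ * opNorm (A k))) := by
            exact mul_lt_mul_of_pos_left hck (mul_pos hN0 hNk)
        _ = (2 : ℝ) ^ ((3 : ℤ) * (1 - (m : ℤ))) * ((2*m).choose (m+k) : ℝ)
            * (pell k : ℝ) ^ 2 := mul_div_cancel₀ _ (mul_pos hN0 hNk).ne'
        _ = ((8:ℝ)^(m-1))⁻¹ * (((2*m).choose (m+k) : ℝ) * (pell k : ℝ)^2) := by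
            rw [PellAux.two_zpow_neg m hm]; ring
    have h2 := Finset.sum_lt_sum_of_nonempty hne hstrict
    have h3 : ∑ k ∈ ((Finset.Icc 1 m).filter fun k => opNorm (A k) ≠ 0),
        ((8:ℝ)^(m-1))⁻¹ * (((2*m).choose (m+k) : ℝ) * (pell k : ℝ)^2)
      ≤ ∑ k ∈ Finset.Icc 1 m,
        ((8:ℝ)^(m-1))⁻¹ * (((2*m).choose (m+k) : ℝ) * (pell k : ℝ)^2) := by
      refine Finset.sum_le_sum_of_subset_of_nonneg (Finset.filter_subset _ _)
        fun k hk _ => ?_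
      have := hQpos k hk
      positivity
    linarith
  · -- upper bound
    by_contra hcon
    push_neg at hcon
    have hup := PellAux.one_le_up m hm A hAm lam hlam0 u hu hlam
    have hstrict : ∀ k ∈ Finset.Icc 1 m,
        opNorm (A m)⁻¹ * opNorm (A (m - k)) * (‖lam‖ ^ k)⁻¹
          < ((8:ℝ)^(m-1))⁻¹ * (((2*m).choose (m+k) : ℝ) * (pell k : ℝ)^2) := by
      intro k hk
      obtain ⟨hk1, hk2⟩ := Finset.mem_Icc.mp hk
      have hQ := hQpos k hk
      have hch' : (0:ℝ) < ((2*m).choose (m+k) : ℝ) := by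
        exact_mod_cast Nat.choose_pos (by omega : m + k ≤ 2*m)
      have hp' : (0:ℝ) < (pell k : ℝ) := by
        obtain ⟨j, rfl⟩ : ∃ j, k = j+1 := ⟨k-1, by omega⟩
        exact_mod_cast PellAux.pell_pos j
      have hd0 : (0:ℝ) ≤ (2 : ℝ) ^ ((3 : ℤ) * ((m : ℤ) - 1))
          * (((2*m).choose (m+k) : ℝ))⁻¹ * ((pell k : ℝ) ^ 2)⁻¹
          * opNorm (A (m - k)) * opNorm (A m)⁻¹ := by
        have h2p : (0:ℝ) ≤ (2 : ℝ) ^ ((3 : ℤ) * ((m : ℤ) - 1)) := le_of_lt (by positivity)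
        exact mul_nonneg (mul_nonneg (mul_nonneg (mul_nonneg h2p
          (inv_nonneg.mpr hch'.le)) (inv_nonneg.mpr (pow_nonneg hp'.le 2)))
          (PellAux.opNorm_nonneg _)) (PellAux.opNorm_nonneg _)
      have hrle : ((2 : ℝ) ^ ((3 : ℤ) * ((m : ℤ) - 1))
          * (((2*m).choose (m+k) : ℝ))⁻¹ * ((pell k : ℝ) ^ 2)⁻¹
          * opNorm (A (m - k)) * opNorm (A m)⁻¹) ^ ((1:ℝ)/k) ≤ r₂ := by
        rw [hr₂]
        exact Finset.le_sup' (fun k => ((2 : ℝ) ^ ((3 : ℤ) * ((m : ℤ) - 1))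
            * ((Nat.choose (2 * m) (m + k) : ℝ))⁻¹ * ((pell k : ℝ) ^ 2)⁻¹
            * opNorm (A (m - k)) * opNorm (A m)⁻¹) ^ ((1 : ℝ) / k)) hk
      have hck : (2 : ℝ) ^ ((3 : ℤ) * ((m : ℤ) - 1))
          * (((2*m).choose (m+k) : ℝ))⁻¹ * ((pell k : ℝ) ^ 2)⁻¹
          * opNorm (A (m - k)) * opNorm (A m)⁻¹ < ‖lam‖ ^ k := by
        calc (2 : ℝ) ^ ((3 : ℤ) * ((m : ℤ) - 1))
            * (((2*m).choose (m+k) : ℝ))⁻¹ * ((pell k : ℝ) ^ 2)⁻¹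
            * opNorm (A (m - k)) * opNorm (A m)⁻¹
            = (((2 : ℝ) ^ ((3 : ℤ) * ((m : ℤ) - 1))
              * (((2*m).choose (m+k) : ℝ))⁻¹ * ((pell k : ℝ) ^ 2)⁻¹
              * opNorm (A (m - k)) * opNorm (A m)⁻¹) ^ ((1:ℝ)/k)) ^ k :=
              (PellAux.rpow_one_div_pow hd0 (by omega)).symm
          _ < ‖lam‖ ^ k :=
              pow_lt_pow_left₀ (lt_of_le_of_lt hrle hcon) (Real.rpow_nonneg hd0 _) (by omega)
      have hckpos : (0:ℝ) < ‖lam‖ ^ k := pow_pos hcpos k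
      have hlt1 : ((2 : ℝ) ^ ((3 : ℤ) * ((m : ℤ) - 1))
          * (((2*m).choose (m+k) : ℝ))⁻¹ * ((pell k : ℝ) ^ 2)⁻¹
          * opNorm (A (m - k)) * opNorm (A m)⁻¹) * (‖lam‖ ^ k)⁻¹ < 1 := by
        rw [← div_eq_mul_inv]
        exact (div_lt_one hckpos).mpr hck
      have heq : opNorm (A m)⁻¹ * opNorm (A (m - k)) * (‖lam‖ ^ k)⁻¹
          = (((2 : ℝ) ^ ((3 : ℤ) * ((m : ℤ) - 1))
            * (((2*m).choose (m+k) : ℝ))⁻¹ * ((pell k : ℝ) ^ 2)⁻¹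
            * opNorm (A (m - k)) * opNorm (A m)⁻¹) * (‖lam‖ ^ k)⁻¹)
            * (((8:ℝ)^(m-1))⁻¹ * (((2*m).choose (m+k) : ℝ) * (pell k : ℝ)^2)) := by
        rw [PellAux.two_zpow_pos m hm]
        field_simp
      rw [heq]
      have hEpos : (0:ℝ) < ((8:ℝ)^(m-1))⁻¹ * (((2*m).choose (m+k) : ℝ) * (pell k : ℝ)^2) :=
        mul_pos (inv_pos.mpr h8pos) hQ
      calc _ < 1 * (((8:ℝ)^(m-1))⁻¹ * (((2*m).choose (m+k) : ℝ) * (pell k : ℝ)^2)) :=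
            mul_lt_mul_of_pos_right hlt1 hEpos
        _ = _ := one_mul _
    have h2 := Finset.sum_lt_sum_of_nonempty (Finset.nonempty_Icc.mpr hm) hstrict
    linarith
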